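/- Let G = (V,E) be a finite hypergraph of rank r with minimum degree δ(G) ≥ 2rk², where k ≥ 2 is an integer. Then G admits a (1/k)-majority (k+1)-edge-colouring, i.e., a colouring c : E → {1,…,k+1} such that for every vertex v and every colour i, the number of hyperedges containing v with colour i is at most ⌊d(v)/k⌋. -/

import Mathlib

open Finset

lemma exists_kernel {α : Type} [DecidableEq α] {κ : Type} [Fintype κ]
    (S : Finset α) (L : κ → α → ℚ) (h : Fintype.card κ < S.card) :
    ∃ Y : α → ℚ, (∃ a ∈ S, Y a ≠ 0) ∧ (∀ a, a ∉ S → Y a = 0) ∧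
      ∀ c, ∑ a ∈ S, L c a * Y a = 0 := by
  classical
  let φ : ({a // a ∈ S} → ℚ) →ₗ[ℚ] (κ → ℚ) :=
    LinearMap.pi (fun c => ∑ a : {a // a ∈ S}, L c a.1 • LinearMap.proj a)
  have hker : LinearMap.ker φ ≠ ⊥ := by
    intro hbot
    have hinj : Function.Injective φ := LinearMap.ker_eq_bot.1 hbot
    have := LinearMap.finrank_le_finrank_of_injective hinj
    rw [Module.finrank_fintype_fun_eq_card, Module.finrank_fintype_fun_eq_card,
      Fintype.card_coe] at this
    omega
  obtain ⟨y, hy, hy0⟩ := Submodule.ne_bot_iff _ |>.1 hker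
  have hyc : ∀ c, ∑ a : {a // a ∈ S}, L c a.1 * y a = 0 := by
    intro c
    have := congrFun (LinearMap.mem_ker.1 hy) c
    simpa [φ, LinearMap.pi_apply, LinearMap.sum_apply, LinearMap.smul_apply,
      smul_eq_mul] using this
  refine ⟨fun a => if h : a ∈ S then y ⟨a, h⟩ else 0, ?_, ?_, ?_⟩
  · obtain ⟨a, ha⟩ := Function.ne_iff.1 hy0
    exact ⟨a.1, a.2, by simpa [dif_pos a.2] using ha⟩
  · intro a ha; simp [dif_neg ha]
  · intro c
    rw [← Finset.sum_coe_sort S]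
    convert hyc c using 1
    exact Finset.sum_congr rfl (fun a _ => by simp [dif_pos a.2])


section

variable {V : Type} [Fintype V] [DecidableEq V]

lemma integral_case (E : Finset (Finset V)) (r k : ℕ)
    (x : Finset V → Fin (k+1) → ℚ)
    (hfrac : (E ×ˢ (univ : Finset (Fin (k+1)))).filter
        (fun p => 0 < x p.1 p.2 ∧ x p.1 p.2 < 1) = ∅)
    (h0 : ∀ e ∈ E, ∀ i, 0 ≤ x e i) (h1 : ∀ e ∈ E, ∀ i, x e i ≤ 1)
    (hsum : ∀ e ∈ E, ∑ i, x e i = 1)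
    (hinv : ∀ (v : V) (i : Fin (k+1)),
      ((E.filter (fun e => v ∈ e)).card : ℚ)/(k+1) + (2*r*k : ℚ)/(k+1)
        < ((E.filter (fun e => v ∈ e ∧ 0 < x e i)).card : ℚ) →
      ∑ e ∈ E.filter (fun e => v ∈ e), x e i
        = ((E.filter (fun e => v ∈ e)).card : ℚ)/(k+1)) :
    ∃ c : Finset V → Fin (k+1), ∀ (v : V) (i : Fin (k+1)),
      ((E.filter (fun e => v ∈ e ∧ c e = i)).card : ℚ)
        ≤ ((E.filter (fun e => v ∈ e)).card : ℚ)/(k+1) + (2*r*k : ℚ)/(k+1) := by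
  have hzo : ∀ e ∈ E, ∀ i, x e i = 0 ∨ x e i = 1 := by
    intro e he i
    have hnf : ¬ (0 < x e i ∧ x e i < 1) := by
      intro h
      have : (e, i) ∈ (E ×ˢ (univ : Finset (Fin (k+1)))).filter
          (fun p => 0 < x p.1 p.2 ∧ x p.1 p.2 < 1) := by
        simp [Finset.mem_filter, Finset.mem_product, he, h]
      rw [hfrac] at this; exact absurd this (Finset.notMem_empty _)
    rcases lt_or_eq_of_le (h0 e he i) with hlt | heq
    · right
      rcases lt_or_eq_of_le (h1 e he i) with hlt1 | heq1
      · exact absurd ⟨hlt, hlt1⟩ hnf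
      · exact heq1
    · left; exact heq.symm
  have hex : ∀ e ∈ E, ∃ i, x e i = 1 := by
    intro e he
    have : ∑ i, x e i ≠ 0 := by rw [hsum e he]; norm_num
    obtain ⟨i, _, hi⟩ := Finset.exists_ne_zero_of_sum_ne_zero this
    exact ⟨i, (hzo e he i).resolve_left hi⟩
  refine ⟨fun e => if h : ∃ i, x e i = 1 then h.choose else 0, ?_⟩
  intro v i
  set c : Finset V → Fin (k+1) := fun e => if h : ∃ i, x e i = 1 then h.choose else 0 with hc
  have hc1 : ∀ e ∈ E, x e (c e) = 1 := by
    intro e he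
    have h := hex e he
    simp only [hc, dif_pos h]
    exact h.choose_spec
  have hsub : E.filter (fun e => v ∈ e ∧ c e = i) ⊆ E.filter (fun e => v ∈ e ∧ 0 < x e i) := by
    intro e he
    rw [Finset.mem_filter] at he ⊢
    obtain ⟨heE, hv, hce⟩ := he
    exact ⟨heE, hv, by rw [← hce, hc1 e heE]; norm_num⟩
  have hcard := Finset.card_le_card hsub
  by_cases hbig : ((E.filter (fun e => v ∈ e)).card : ℚ)/(k+1) + (2*r*k : ℚ)/(k+1)
      < ((E.filter (fun e => v ∈ e ∧ 0 < x e i)).card : ℚ)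
  · exfalso
    have hL := hinv v i hbig
    have hNL : (((E.filter (fun e => v ∈ e ∧ 0 < x e i)).card : ℚ))
        = ∑ e ∈ E.filter (fun e => v ∈ e), x e i := by
      rw [← Finset.filter_filter]
      rw [Finset.card_filter]
      push_cast
      apply Finset.sum_congr rfl
      intro e he
      have he' : e ∈ E := Finset.mem_of_mem_filter e he
      rcases hzo e he' i with h | h <;> simp [h]
    rw [hNL, hL] at hbig
    have hC : (0:ℚ) ≤ (2*r*k : ℚ)/(k+1) := by positivity
    linarith
  · push_neg at hbig
    calc ((E.filter (fun e => v ∈ e ∧ c e = i)).card : ℚ)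
        ≤ ((E.filter (fun e => v ∈ e ∧ 0 < x e i)).card : ℚ) := by exact_mod_cast hcard
      _ ≤ _ := hbig




set_option maxHeartbeats 1000000 in
lemma counting (E : Finset (Finset V)) (r k : ℕ) (hk : 2 ≤ k) (hr : 1 ≤ r)
    (hE : ∀ e ∈ E, e.card ≤ r)
    (x : Finset V → Fin (k+1) → ℚ)
    (h0 : ∀ e ∈ E, ∀ i, 0 ≤ x e i) (h1 : ∀ e ∈ E, ∀ i, x e i ≤ 1)
    (hsum : ∀ e ∈ E, ∑ i, x e i = 1)
    (hinv : ∀ (v : V) (i : Fin (k+1)),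
      ((E.filter (fun e => v ∈ e)).card : ℚ)/(k+1) + (2*r*k : ℚ)/(k+1)
        < ((E.filter (fun e => v ∈ e ∧ 0 < x e i)).card : ℚ) →
      ∑ e ∈ E.filter (fun e => v ∈ e), x e i = ((E.filter (fun e => v ∈ e)).card : ℚ)/(k+1))
    (hne : ((E ×ˢ (univ : Finset (Fin (k+1)))).filter
        (fun p => 0 < x p.1 p.2 ∧ x p.1 p.2 < 1)).Nonempty) :
    ((univ : Finset (V × Fin (k+1))).filter (fun p =>
        ((E.filter (fun e => p.1 ∈ e)).card : ℚ)/(k+1) + (2*r*k : ℚ)/(k+1)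
          < ((E.filter (fun e => p.1 ∈ e ∧ 0 < x e p.2)).card : ℚ))).card
      + (E.filter (fun e => ∃ i, 0 < x e i ∧ x e i < 1)).card
      < ((E ×ˢ (univ : Finset (Fin (k+1)))).filter
          (fun p => 0 < x p.1 p.2 ∧ x p.1 p.2 < 1)).card := by
  set Fl := E.filter (fun e => ∃ i, 0 < x e i ∧ x e i < 1) with hFl
  set Ap := (univ : Finset (V × Fin (k+1))).filter (fun p =>
        ((E.filter (fun e => p.1 ∈ e)).card : ℚ)/(k+1) + (2*r*k : ℚ)/(k+1)
          < ((E.filter (fun e => p.1 ∈ e ∧ 0 < x e p.2)).card : ℚ)) with hAp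
  set f : Finset V → ℕ := fun e => ((univ : Finset (Fin (k+1))).filter
      (fun i => 0 < x e i ∧ x e i < 1)).card with hf
  set W : Finset V → Fin (k+1) → ℚ := fun e i =>
      if 0 < x e i ∧ x e i < 1 then 1 - x e i else 0 with hW
  set q : V × Fin (k+1) → ℚ := fun p => ∑ e ∈ E.filter (fun e => p.1 ∈ e), W e p.2 with hq
  set D : ℚ := ∑ e ∈ Fl, ((f e : ℚ) - 1) with hD
  -- basic facts
  have hpair : ∀ e ∈ E, ∀ i j : Fin (k+1), i ≠ j → x e i + x e j ≤ 1 := by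
    intro e he i j hij
    rw [← hsum e he, ← Finset.sum_pair hij]
    exact Finset.sum_le_sum_of_subset_of_nonneg (Finset.subset_univ _)
      (fun l _ _ => h0 e he l)
  have hone : ∀ e ∈ Fl, ∀ j, ¬(0 < x e j ∧ x e j < 1) → x e j = 0 := by
    intro e he j hj
    rw [hFl, Finset.mem_filter] at he
    obtain ⟨heE, i0, hi0⟩ := he
    rcases lt_or_eq_of_le (h0 e heE j) with hlt | heq
    · exfalso
      rcases lt_or_eq_of_le (h1 e heE j) with hlt1 | heq1
      · exact hj ⟨hlt, hlt1⟩
      · have hij : i0 ≠ j := by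
          intro h; rw [h] at hi0; rw [← heq1] at hi0; exact absurd hi0.2 (lt_irrefl _)
        have := hpair e heE i0 j hij
        rw [← heq1] at this
        linarith [hi0.1]
    · exact heq.symm
  have hf2 : ∀ e ∈ Fl, 2 ≤ f e := by
    intro e he
    have he' := he
    rw [hFl, Finset.mem_filter] at he'
    obtain ⟨heE, i0, hi0⟩ := he'
    by_contra hlt
    push_neg at hlt
    have hi0m : i0 ∈ (univ : Finset (Fin (k+1))).filter (fun i => 0 < x e i ∧ x e i < 1) := by
      simp [hi0]
    have huniq : ∀ j, j ≠ i0 → ¬(0 < x e j ∧ x e j < 1) := by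
      intro j hji hfr
      have hjm : j ∈ (univ : Finset (Fin (k+1))).filter (fun i => 0 < x e i ∧ x e i < 1) := by
        simp [hfr]
      have : 2 ≤ f e := by
        rw [hf]
        have : ({j, i0} : Finset (Fin (k+1))) ⊆
            (univ : Finset (Fin (k+1))).filter (fun i => 0 < x e i ∧ x e i < 1) := by
          intro a ha
          rcases Finset.mem_insert.1 ha with h | h
          · rwa [h]
          · rw [Finset.mem_singleton.1 h]; exact hi0m
        calc 2 = ({j, i0} : Finset (Fin (k+1))).card := (Finset.card_pair hji).symm
          _ ≤ _ := Finset.card_le_card this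
      omega
    have hzero : ∀ j, j ≠ i0 → x e j = 0 := fun j hj => hone e he j (huniq j hj)
    have : ∑ i, x e i = x e i0 := by
      apply Finset.sum_eq_single
      · intro j _ hj; exact hzero j hj
      · intro h; exact absurd (Finset.mem_univ i0) h
    rw [hsum e heE] at this
    rw [← this] at hi0
    exact absurd hi0.2 (lt_irrefl _)
  have hW0 : ∀ e i, 0 ≤ W e i := by
    intro e i; rw [hW]; dsimp only
    split
    · rename_i h; linarith [h.2]
    · exact le_refl 0
  have hfP : ((E ×ˢ (univ : Finset (Fin (k+1)))).filter
      (fun p => 0 < x p.1 p.2 ∧ x p.1 p.2 < 1)).card = ∑ e ∈ E, f e := by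
    rw [Finset.card_filter, Finset.sum_product]
    exact Finset.sum_congr rfl (fun e _ => (Finset.card_filter _ _).symm)
  have hWD : ∀ e ∈ Fl, ∑ i, W e i = (f e : ℚ) - 1 := by
    intro e he
    have heE : e ∈ E := Finset.mem_of_mem_filter e he
    have h1' : ∑ i, W e i = ∑ i ∈ (univ : Finset (Fin (k+1))).filter
        (fun i => 0 < x e i ∧ x e i < 1), (1 - x e i) := by
      rw [Finset.sum_filter]
    have h2' : ∑ i ∈ (univ : Finset (Fin (k+1))).filter
        (fun i => 0 < x e i ∧ x e i < 1), x e i = 1 := by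
      have : ∑ i ∈ (univ : Finset (Fin (k+1))).filter
          (fun i => 0 < x e i ∧ x e i < 1), x e i = ∑ i, x e i := by
        apply Finset.sum_subset (Finset.filter_subset _ _)
        intro j _ hj
        apply hone e he j
        intro hfr
        exact hj (Finset.mem_filter.2 ⟨Finset.mem_univ j, hfr⟩)
      rw [this, hsum e heE]
    rw [h1', Finset.sum_sub_distrib, h2', Finset.sum_const, nsmul_eq_mul, mul_one]
  have hf0 : ∀ e ∈ E, e ∉ Fl → ∀ i, W e i = 0 := by
    intro e heE he i
    rw [hFl, Finset.mem_filter] at he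
    have he' : ¬ ∃ i, 0 < x e i ∧ x e i < 1 := fun hex => he ⟨heE, hex⟩
    rw [hW]; dsimp only
    rw [if_neg (fun h => he' ⟨i, h⟩)]
  have hswap : ∑ p ∈ Ap, q p ≤ (r:ℚ) * D := by
    have s1 : ∑ p ∈ Ap, q p ≤ ∑ p ∈ (univ : Finset (V × Fin (k+1))), q p :=
      Finset.sum_le_sum_of_subset_of_nonneg (Finset.subset_univ _)
        (fun p _ _ => Finset.sum_nonneg (fun e _ => hW0 e p.2))
    have s2 : ∑ p ∈ (univ : Finset (V × Fin (k+1))), q p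
        = ∑ e ∈ E, (e.card : ℚ) * ∑ i, W e i := by
      rw [Fintype.sum_prod_type]
      have hqv : ∀ (v : V) (i : Fin (k+1)), q (v, i) = ∑ e ∈ E, if v ∈ e then W e i else 0 := by
        intro v i; rw [hq]; dsimp only; rw [Finset.sum_filter]
      calc ∑ v, ∑ i, q (v, i)
          = ∑ v, ∑ i : Fin (k+1), ∑ e ∈ E, if v ∈ e then W e i else 0 :=
            Finset.sum_congr rfl fun v _ => Finset.sum_congr rfl fun i _ => hqv v i
        _ = ∑ v, ∑ e ∈ E, ∑ i : Fin (k+1), if v ∈ e then W e i else 0 :=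
            Finset.sum_congr rfl fun v _ => Finset.sum_comm
        _ = ∑ e ∈ E, ∑ v, ∑ i : Fin (k+1), if v ∈ e then W e i else 0 := Finset.sum_comm
        _ = ∑ e ∈ E, ∑ v, (if v ∈ e then ∑ i, W e i else 0) := by
            refine Finset.sum_congr rfl fun e _ => Finset.sum_congr rfl fun v _ => ?_
            split <;> simp
        _ = ∑ e ∈ E, (e.card : ℚ) * ∑ i, W e i := by
            refine Finset.sum_congr rfl fun e _ => ?_
            rw [← Finset.sum_filter, Finset.filter_univ_mem, Finset.sum_const, nsmul_eq_mul]
    have s3 : ∑ e ∈ E, (e.card : ℚ) * ∑ i, W e i = ∑ e ∈ Fl, (e.card : ℚ) * ((f e : ℚ) - 1) := by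
      rw [← Finset.sum_filter_add_sum_filter_not E (fun e => ∃ i, 0 < x e i ∧ x e i < 1)]
      have z2 : ∑ e ∈ E.filter (fun e => ¬ ∃ i, 0 < x e i ∧ x e i < 1),
          (e.card : ℚ) * ∑ i, W e i = 0 := by
        apply Finset.sum_eq_zero
        intro e he
        rw [Finset.mem_filter] at he
        have : e ∉ Fl := by
          rw [hFl, Finset.mem_filter]
          intro h; exact he.2 h.2
        rw [Finset.sum_eq_zero (fun i _ => hf0 e he.1 this i), mul_zero]
      rw [z2, add_zero]
      exact Finset.sum_congr rfl fun e he => by rw [hWD e he]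
    have s4 : ∑ e ∈ Fl, (e.card : ℚ) * ((f e : ℚ) - 1) ≤ ∑ e ∈ Fl, (r:ℚ) * ((f e : ℚ) - 1) := by
      apply Finset.sum_le_sum
      intro e he
      have hfe : (2:ℚ) ≤ (f e : ℚ) := by exact_mod_cast hf2 e he
      have hcr : ((e.card : ℕ) : ℚ) ≤ (r:ℚ) := by
        exact_mod_cast hE e (Finset.mem_of_mem_filter e he)
      apply mul_le_mul_of_nonneg_right hcr
      linarith
    calc ∑ p ∈ Ap, q p ≤ ∑ p ∈ (univ : Finset (V × Fin (k+1))), q p := s1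
      _ = ∑ e ∈ E, (e.card : ℚ) * ∑ i, W e i := s2
      _ = ∑ e ∈ Fl, (e.card : ℚ) * ((f e : ℚ) - 1) := s3
      _ ≤ ∑ e ∈ Fl, (r:ℚ) * ((f e : ℚ) - 1) := s4
      _ = (r:ℚ) * D := by rw [← Finset.mul_sum, hD]
  have hqgt : ∀ p ∈ Ap, (2*r*k:ℚ)/(k+1) < q p := by
    intro p hp
    rw [hAp, Finset.mem_filter] at hp
    obtain ⟨-, hlt⟩ := hp
    have hL := hinv p.1 p.2 hlt
    have hsplit : ∀ e ∈ E.filter (fun e => p.1 ∈ e),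
        W e p.2 = (if 0 < x e p.2 then (1:ℚ) else 0) - x e p.2 := by
      intro e he
      have heE : e ∈ E := Finset.mem_of_mem_filter e he
      rw [hW]; dsimp only
      rcases lt_or_eq_of_le (h0 e heE p.2) with hlt0 | heq0
      · rcases lt_or_eq_of_le (h1 e heE p.2) with hlt1 | heq1
        · rw [if_pos ⟨hlt0, hlt1⟩, if_pos hlt0]
        · rw [if_neg (fun h => absurd h.2 (by rw [heq1]; exact lt_irrefl _)),
            if_pos hlt0, heq1]; ring
      · rw [if_neg (fun h => absurd h.1 (by rw [← heq0]; exact lt_irrefl _)),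
          if_neg (by rw [← heq0]; exact lt_irrefl _), ← heq0]; ring
    have hqN : q p = ((E.filter (fun e => p.1 ∈ e ∧ 0 < x e p.2)).card : ℚ)
        - ∑ e ∈ E.filter (fun e => p.1 ∈ e), x e p.2 := by
      rw [hq]; dsimp only
      rw [Finset.sum_congr rfl hsplit, Finset.sum_sub_distrib]
      congr 1
      rw [Finset.sum_boole, Finset.filter_filter]
    rw [hqN, hL]
    linarith
  have hFlne : Fl.Nonempty := by
    obtain ⟨p, hp⟩ := hne
    rw [Finset.mem_filter, Finset.mem_product] at hp
    exact ⟨p.1, Finset.mem_filter.2 ⟨hp.1.1, ⟨p.2, hp.2⟩⟩⟩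
  have hD1 : (1:ℚ) ≤ D := by
    have hterm : ∀ e ∈ Fl, (1:ℚ) ≤ (f e : ℚ) - 1 := by
      intro e he
      have : (2:ℚ) ≤ (f e : ℚ) := by exact_mod_cast hf2 e he
      linarith
    have hcard1 : (1:ℚ) ≤ (Fl.card : ℚ) := by
      exact_mod_cast Nat.one_le_iff_ne_zero.2 (Finset.card_ne_zero_of_mem hFlne.choose_spec)
    calc (1:ℚ) ≤ (Fl.card : ℚ) := hcard1
      _ = ∑ _e ∈ Fl, (1:ℚ) := by rw [Finset.sum_const, nsmul_eq_mul, mul_one]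
      _ ≤ D := Finset.sum_le_sum hterm
  have hApD : (Ap.card : ℚ) < D := by
    rcases Finset.eq_empty_or_nonempty Ap with hAe | hAne
    · rw [hAe]; simpa using by linarith
    · have h5 : (Ap.card:ℚ) * ((2*r*k:ℚ)/(k+1)) < (r:ℚ) * D := by
        calc (Ap.card:ℚ) * ((2*r*k:ℚ)/(k+1)) = ∑ _p ∈ Ap, (2*r*k:ℚ)/(k+1) := by
              rw [Finset.sum_const, nsmul_eq_mul]
          _ < ∑ p ∈ Ap, q p := Finset.sum_lt_sum_of_nonempty hAne hqgt
          _ ≤ (r:ℚ) * D := hswap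
      have hk1 : (0:ℚ) < (k:ℚ) + 1 := by positivity
      have h6 : (Ap.card:ℚ) * (2*r*k) < (r:ℚ) * D * ((k:ℚ)+1) := by
        have := mul_lt_mul_of_pos_right h5 hk1
        rwa [mul_assoc, div_mul_cancel₀ _ (ne_of_gt hk1)] at this
      have hD0 : (0:ℚ) ≤ D := by linarith
      have hrq : (1:ℚ) ≤ (r:ℚ) := by exact_mod_cast hr
      have hkq : (2:ℚ) ≤ (k:ℚ) := by exact_mod_cast hk
      have hr0 : (0:ℚ) < (r:ℚ) := by linarith
      have hk0 : (0:ℚ) < (k:ℚ) := by linarith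
      have h7 : (r:ℚ) * D * ((k:ℚ)+1) ≤ (2*(r:ℚ)*(k:ℚ)) * D := by
        nlinarith [mul_nonneg (mul_nonneg hr0.le hD0) (by linarith : (0:ℚ) ≤ (k:ℚ)-1)]
      have h2rk : (0:ℚ) < 2*(r:ℚ)*(k:ℚ) := by positivity
      have h8 : (2*(r:ℚ)*(k:ℚ)) * (Ap.card:ℚ) < (2*(r:ℚ)*(k:ℚ)) * D := by
        calc (2*(r:ℚ)*(k:ℚ)) * (Ap.card:ℚ) = (Ap.card:ℚ) * (2*r*k) := by ring
          _ < (r:ℚ) * D * ((k:ℚ)+1) := h6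
          _ ≤ (2*(r:ℚ)*(k:ℚ)) * D := h7
      exact (mul_lt_mul_iff_right₀ h2rk).1 h8
  have hcast : (((E ×ˢ (univ : Finset (Fin (k+1)))).filter
      (fun p => 0 < x p.1 p.2 ∧ x p.1 p.2 < 1)).card : ℚ) = D + (Fl.card : ℚ) := by
    rw [hfP]
    push_cast
    rw [← Finset.sum_filter_add_sum_filter_not E (fun e => ∃ i, 0 < x e i ∧ x e i < 1)]
    have z2 : ∑ e ∈ E.filter (fun e => ¬ ∃ i, 0 < x e i ∧ x e i < 1), ((f e : ℕ) : ℚ) = 0 := by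
      apply Finset.sum_eq_zero
      intro e he
      rw [Finset.mem_filter] at he
      have : f e = 0 := by
        rw [hf]
        dsimp only
        rw [Finset.card_eq_zero, Finset.filter_eq_empty_iff]
        intro i _
        exact fun h => he.2 ⟨i, h⟩
      rw [this]; norm_num
    rw [z2, add_zero, hD]
    rw [Finset.sum_sub_distrib, Finset.sum_const, nsmul_eq_mul, mul_one]
    ring
  have : (Ap.card : ℚ) + (Fl.card : ℚ) < (((E ×ˢ (univ : Finset (Fin (k+1)))).filter
      (fun p => 0 < x p.1 p.2 ∧ x p.1 p.2 < 1)).card : ℚ) := by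
    rw [hcast]; linarith
  exact_mod_cast this





set_option maxHeartbeats 2000000 in
lemma key (E : Finset (Finset V)) (r k : ℕ) (hk : 2 ≤ k) (hr : 1 ≤ r)
    (hE : ∀ e ∈ E, e.card ≤ r) :
    ∀ (n : ℕ) (x : Finset V → Fin (k+1) → ℚ),
      ((E ×ˢ (univ : Finset (Fin (k+1)))).filter
        (fun p => 0 < x p.1 p.2 ∧ x p.1 p.2 < 1)).card ≤ n →
      (∀ e ∈ E, ∀ i, 0 ≤ x e i) → (∀ e ∈ E, ∀ i, x e i ≤ 1) →
      (∀ e ∈ E, ∑ i, x e i = 1) →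
      (∀ (v : V) (i : Fin (k+1)),
        ((E.filter (fun e => v ∈ e)).card : ℚ)/(k+1) + (2*r*k : ℚ)/(k+1)
          < ((E.filter (fun e => v ∈ e ∧ 0 < x e i)).card : ℚ) →
        ∑ e ∈ E.filter (fun e => v ∈ e), x e i = ((E.filter (fun e => v ∈ e)).card : ℚ)/(k+1)) →
      ∃ c : Finset V → Fin (k+1), ∀ (v : V) (i : Fin (k+1)),
        ((E.filter (fun e => v ∈ e ∧ c e = i)).card : ℚ)
          ≤ ((E.filter (fun e => v ∈ e)).card : ℚ)/(k+1) + (2*r*k : ℚ)/(k+1) := by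
  intro n
  induction n with
  | zero =>
    intro x hn h0 h1 hsum hinv
    exact integral_case E r k x (Finset.card_eq_zero.1 (Nat.le_zero.1 hn)) h0 h1 hsum hinv
  | succ n ih =>
    intro x hn h0 h1 hsum hinv
    by_cases hfe : ((E ×ˢ (univ : Finset (Fin (k+1)))).filter
        (fun p => 0 < x p.1 p.2 ∧ x p.1 p.2 < 1)) = ∅
    · exact integral_case E r k x hfe h0 h1 hsum hinv
    have hne := Finset.nonempty_iff_ne_empty.2 hfe
    have hcount := counting E r k hk hr hE x h0 h1 hsum hinv hne
    set fP := (E ×ˢ (univ : Finset (Fin (k+1)))).filter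
        (fun p => 0 < x p.1 p.2 ∧ x p.1 p.2 < 1) with hfPdef
    set Fl := E.filter (fun e => ∃ i, 0 < x e i ∧ x e i < 1) with hFldef
    set Ap := (univ : Finset (V × Fin (k+1))).filter (fun p =>
        ((E.filter (fun e => p.1 ∈ e)).card : ℚ)/(k+1) + (2*r*k : ℚ)/(k+1)
          < ((E.filter (fun e => p.1 ∈ e ∧ 0 < x e p.2)).card : ℚ)) with hApdef
    have hcardκ : Fintype.card ({e // e ∈ Fl} ⊕ {p // p ∈ Ap}) < fP.card := by
      rw [Fintype.card_sum, Fintype.card_coe, Fintype.card_coe]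
      omega
    obtain ⟨Y, ⟨p₀, hp₀, hYp₀⟩, hYsupp, hYcons⟩ :=
      exists_kernel fP
        (Sum.elim
          (fun (es : {e // e ∈ Fl}) (a : Finset V × Fin (k+1)) =>
            if a.1 = es.1 then (1:ℚ) else 0)
          (fun (pr : {p // p ∈ Ap}) (a : Finset V × Fin (k+1)) =>
            if pr.1.1 ∈ a.1 ∧ a.2 = pr.1.2 then (1:ℚ) else 0)) hcardκ
    -- membership facts
    have hfPmem : ∀ a : Finset V × Fin (k+1), a ∈ fP ↔
        a.1 ∈ E ∧ (0 < x a.1 a.2 ∧ x a.1 a.2 < 1) := by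
      intro a
      rw [hfPdef, Finset.mem_filter, Finset.mem_product]
      constructor
      · rintro ⟨⟨h1, _⟩, h2⟩; exact ⟨h1, h2⟩
      · rintro ⟨h1, h2⟩; exact ⟨⟨h1, Finset.mem_univ _⟩, h2⟩
    -- row sums of Y vanish
    have hrow : ∀ e ∈ E, ∑ i, Y (e, i) = 0 := by
      intro e he
      by_cases heFl : e ∈ Fl
      · have hc := hYcons (Sum.inl ⟨e, heFl⟩)
        simp only [Sum.elim_inl, ite_mul, one_mul, zero_mul] at hc
        rw [← Finset.sum_filter] at hc
        have h2 : ∑ a ∈ ({e} ×ˢ (univ : Finset (Fin (k+1)))), Y a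
            = ∑ a ∈ fP.filter (fun a => a.1 = e), Y a := by
          symm
          apply Finset.sum_subset
          · intro a ha
            rw [Finset.mem_filter] at ha
            rw [Finset.mem_product, Finset.mem_singleton]
            exact ⟨ha.2, Finset.mem_univ _⟩
          · intro a ha hna
            rw [Finset.mem_product, Finset.mem_singleton] at ha
            by_cases hafP : a ∈ fP
            · exact absurd (Finset.mem_filter.2 ⟨hafP, ha.1⟩) hna
            · exact hYsupp a hafP
        rw [← hc, ← h2, Finset.sum_product, Finset.sum_singleton]
      · apply Finset.sum_eq_zero
        intro i _
        apply hYsupp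
        intro hmem
        rw [hfPmem] at hmem
        exact heFl (Finset.mem_filter.2 ⟨he, ⟨i, hmem.2⟩⟩)
    -- column sums of Y vanish on active pairs
    have hcol : ∀ pr ∈ Ap, ∑ e ∈ E.filter (fun e => (pr : V × Fin (k+1)).1 ∈ e), Y (e, pr.2) = 0 := by
      intro pr hpr
      have hc := hYcons (Sum.inr ⟨pr, hpr⟩)
      simp only [Sum.elim_inr, ite_mul, one_mul, zero_mul] at hc
      rw [← Finset.sum_filter] at hc
      have h2 : ∑ a ∈ ((E.filter (fun e => pr.1 ∈ e)) ×ˢ ({pr.2} : Finset (Fin (k+1)))), Y a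
          = ∑ a ∈ fP.filter (fun a => pr.1 ∈ a.1 ∧ a.2 = pr.2), Y a := by
        symm
        apply Finset.sum_subset
        · intro a ha
          rw [Finset.mem_filter] at ha
          rw [Finset.mem_product, Finset.mem_singleton]
          have := (hfPmem a).1 ha.1
          exact ⟨Finset.mem_filter.2 ⟨this.1, ha.2.1⟩, ha.2.2⟩
        · intro a ha hna
          rw [Finset.mem_product, Finset.mem_singleton] at ha
          by_cases hafP : a ∈ fP
          · exact absurd (Finset.mem_filter.2 ⟨hafP, (Finset.mem_filter.1 ha.1).2, ha.2⟩) hna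
          · exact hYsupp a hafP
      rw [← hc, ← h2, Finset.sum_product]
      exact Finset.sum_congr rfl (fun e _ => (Finset.sum_singleton _ _).symm)

    -- the moving direction
    set T := fP.filter (fun a => Y a ≠ 0) with hTdef
    have hTne : T.Nonempty := ⟨p₀, Finset.mem_filter.2 ⟨hp₀, hYp₀⟩⟩
    set g : (Finset V × Fin (k+1)) → ℚ := fun a =>
      if 0 < Y a then (1 - x a.1 a.2)/(Y a) else (x a.1 a.2)/(-(Y a)) with hgdef
    set lam := T.inf' hTne g with hlamdef
    have hTfacts : ∀ a ∈ T, a.1 ∈ E ∧ 0 < x a.1 a.2 ∧ x a.1 a.2 < 1 ∧ Y a ≠ 0 := by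
      intro a ha; rw [hTdef, Finset.mem_filter] at ha
      have := (hfPmem a).1 ha.1
      exact ⟨this.1, this.2.1, this.2.2, ha.2⟩
    have hgpos : ∀ a ∈ T, 0 < g a := by
      intro a ha
      obtain ⟨_, hx0, hx1, hY⟩ := hTfacts a ha
      simp only [hgdef]
      rcases lt_or_gt_of_ne hY with hneg | hpos
      · rw [if_neg (not_lt.2 hneg.le)]
        exact div_pos hx0 (neg_pos.2 hneg)
      · rw [if_pos hpos]
        exact div_pos (by linarith) hpos
    have hlampos : 0 < lam := by rw [hlamdef, Finset.lt_inf'_iff]; exact hgpos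
    have hlamle : ∀ a ∈ T, lam ≤ g a := fun a ha => Finset.inf'_le g ha
    set x' : Finset V → Fin (k+1) → ℚ := fun e i => x e i + lam * Y (e, i) with hx'def
    have hYT : ∀ (e : Finset V) (i : Fin (k+1)), Y (e,i) ≠ 0 → (e,i) ∈ T := by
      intro e i hY
      refine Finset.mem_filter.2 ⟨?_, hY⟩
      by_contra h
      exact hY (hYsupp _ h)
    have hfix : ∀ e i, Y (e,i) = 0 → x' e i = x e i := by
      intro e i h; simp only [hx'def]; rw [h, mul_zero, add_zero]
    have hup : ∀ e i, 0 < Y (e,i) → x' e i ≤ 1 := by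
      intro e i hY
      have haT := hYT e i (ne_of_gt hY)
      have hle := hlamle _ haT
      simp only [hgdef] at hle
      rw [if_pos hY] at hle
      have h2 := mul_le_mul_of_nonneg_right hle hY.le
      rw [div_mul_cancel₀ _ (ne_of_gt hY)] at h2
      simp only [hx'def]
      linarith
    have hdown : ∀ e i, Y (e,i) < 0 → 0 ≤ x' e i := by
      intro e i hY
      have haT := hYT e i (ne_of_lt hY)
      have hle := hlamle _ haT
      simp only [hgdef] at hle
      rw [if_neg (not_lt.2 hY.le)] at hle
      have hnY : 0 < -Y (e,i) := neg_pos.2 hY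
      have h2 := mul_le_mul_of_nonneg_right hle hnY.le
      rw [div_mul_cancel₀ _ (ne_of_gt hnY)] at h2
      have h3 : lam * (-(Y (e,i))) = -(lam * Y (e,i)) := by ring
      simp only [hx'def]
      linarith
    have h0' : ∀ e ∈ E, ∀ i, 0 ≤ x' e i := by
      intro e he i
      rcases lt_trichotomy (Y (e,i)) 0 with h|h|h
      · exact hdown e i h
      · rw [hfix e i h]; exact h0 e he i
      · have h2 : 0 ≤ lam * Y (e,i) := mul_nonneg hlampos.le h.le
        simp only [hx'def]
        linarith [h0 e he i]
    have h1' : ∀ e ∈ E, ∀ i, x' e i ≤ 1 := by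
      intro e he i
      rcases lt_trichotomy (Y (e,i)) 0 with h|h|h
      · have h2 : 0 ≤ lam * (-(Y (e,i))) := mul_nonneg hlampos.le (by linarith)
        have h3 : lam * (-(Y (e,i))) = -(lam * Y (e,i)) := by ring
        simp only [hx'def]
        linarith [h1 e he i]
      · rw [hfix e i h]; exact h1 e he i
      · exact hup e i h
    have hsum' : ∀ e ∈ E, ∑ i, x' e i = 1 := by
      intro e he
      simp only [hx'def]
      rw [Finset.sum_add_distrib, hsum e he, ← Finset.mul_sum, hrow e he, mul_zero, add_zero]
    have hpos' : ∀ e ∈ E, ∀ i, 0 < x' e i → 0 < x e i := by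
      intro e he i hgt
      by_contra hx
      have hx0 : x e i = 0 := le_antisymm (not_lt.1 hx) (h0 e he i)
      have hnm : (e,i) ∉ fP := by
        rw [hfPmem]
        dsimp only
        rw [hx0]
        rintro ⟨-, h, -⟩
        exact lt_irrefl _ h
      rw [hfix e i (hYsupp _ hnm), hx0] at hgt
      exact lt_irrefl _ hgt
    have hNle : ∀ (v : V) (i : Fin (k+1)),
        (E.filter (fun e => v ∈ e ∧ 0 < x' e i)).card
          ≤ (E.filter (fun e => v ∈ e ∧ 0 < x e i)).card := by
      intro v i
      apply Finset.card_le_card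
      intro e he
      rw [Finset.mem_filter] at he ⊢
      exact ⟨he.1, he.2.1, hpos' e he.1 i he.2.2⟩
    -- strict decrease of the fractional support
    obtain ⟨astar, haT, hgl⟩ := Finset.exists_mem_eq_inf' hTne g
    have hYne := (hTfacts astar haT).2.2.2
    have hlg : lam = g astar := by rw [hlamdef, hgl]
    have hint : x' astar.1 astar.2 = 1 ∨ x' astar.1 astar.2 = 0 := by
      rcases lt_or_gt_of_ne hYne with hneg | hpos
      · right
        simp only [hx'def]
        rw [hlg]
        simp only [hgdef]
        rw [if_neg (not_lt.2 hneg.le)]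
        have hnY : (-(Y astar)) ≠ 0 := by intro h; apply hYne; linarith
        have : x astar.1 astar.2 / (-(Y astar)) * Y (astar.1, astar.2)
            = -(x astar.1 astar.2) := by
          have hee : Y (astar.1, astar.2) = Y astar := rfl
          rw [hee]
          field_simp
        rw [this]; ring
      · left
        simp only [hx'def]
        rw [hlg]
        simp only [hgdef]
        rw [if_pos hpos]
        have hee : Y (astar.1, astar.2) = Y astar := rfl
        rw [hee, div_mul_cancel₀ _ hYne]
        ring
    have hsub : ((E ×ˢ (univ : Finset (Fin (k+1)))).filter
        (fun p => 0 < x' p.1 p.2 ∧ x' p.1 p.2 < 1)) ⊆ fP := by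
      intro a ha
      rw [Finset.mem_filter] at ha
      by_contra hnm
      have h := hYsupp a hnm
      have hxx : x' a.1 a.2 = x a.1 a.2 := hfix a.1 a.2 h
      rw [hxx] at ha
      exact hnm ((hfPmem a).2 ⟨(Finset.mem_product.1 ha.1).1, ha.2⟩)
    have hastar_nm : astar ∉ ((E ×ˢ (univ : Finset (Fin (k+1)))).filter
        (fun p => 0 < x' p.1 p.2 ∧ x' p.1 p.2 < 1)) := by
      rw [Finset.mem_filter]
      rintro ⟨-, hfr⟩
      rcases hint with h|h
      · rw [h] at hfr; exact lt_irrefl _ hfr.2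
      · rw [h] at hfr; exact lt_irrefl _ hfr.1
    have hastar_fP : astar ∈ fP := Finset.mem_of_mem_filter _ haT
    have hss : ((E ×ˢ (univ : Finset (Fin (k+1)))).filter
        (fun p => 0 < x' p.1 p.2 ∧ x' p.1 p.2 < 1)) ⊂ fP :=
      (Finset.ssubset_iff_of_subset hsub).2 ⟨astar, hastar_fP, hastar_nm⟩
    have hcard' : ((E ×ˢ (univ : Finset (Fin (k+1)))).filter
        (fun p => 0 < x' p.1 p.2 ∧ x' p.1 p.2 < 1)).card ≤ n :=
      Nat.lt_succ_iff.1 (lt_of_lt_of_le (Finset.card_lt_card hss) hn)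
    refine ih x' hcard' h0' h1' hsum' ?_
    intro v i hlt'
    have hlt : ((E.filter (fun e => v ∈ e)).card : ℚ)/(k+1) + (2*r*k : ℚ)/(k+1)
        < ((E.filter (fun e => v ∈ e ∧ 0 < x e i)).card : ℚ) :=
      lt_of_lt_of_le hlt' (by exact_mod_cast hNle v i)
    have hmemAp : (v,i) ∈ Ap := by
      rw [hApdef]
      exact Finset.mem_filter.2 ⟨Finset.mem_univ _, hlt⟩
    have hL := hinv v i hlt
    have hc0 : ∑ e ∈ E.filter (fun e => v ∈ e), Y (e, i) = 0 := hcol (v,i) hmemAp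
    simp only [hx'def]
    rw [Finset.sum_add_distrib, hL, ← Finset.mul_sum, hc0, mul_zero, add_zero]




end

open Finset in
/-- Main theorem: every hypergraph of rank `r` with minimum degree at least `2 r k²`
admits a `(1/k)`-majority `(k+1)`-edge-colouring. -/
theorem majority_colouring_hypergraph (V : Type) [Fintype V] [DecidableEq V]
    (E : Finset (Finset V)) (r k : ℕ) (hk : 2 ≤ k)
    (hE : ∀ e ∈ E, e.Nonempty ∧ e.card ≤ r)
    (hδ : ∀ v : V, 2 * r * k ^ 2 ≤ (E.filter (fun e => v ∈ e)).card) :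
    ∃ c : Finset V → Fin (k + 1),
      ∀ (v : V) (i : Fin (k + 1)),
        (E.filter (fun e => v ∈ e ∧ c e = i)).card
          ≤ (E.filter (fun e => v ∈ e)).card / k := by
  by_cases hEe : E = ∅
  · refine ⟨fun _ => ⟨0, Nat.succ_pos k⟩, ?_⟩
    intro v i
    rw [hEe]
    simp
    rfl
  · obtain ⟨e₀, he₀⟩ := Finset.nonempty_iff_ne_empty.2 hEe
    have hr : 1 ≤ r :=
      le_trans (Finset.card_pos.2 (hE e₀ he₀).1) (hE e₀ he₀).2
    have hkpos : 0 < k := by omega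
    have hk1 : (0:ℚ) < (k:ℚ) + 1 := by positivity
    obtain ⟨c, hc⟩ := key E r k hk hr (fun e he => (hE e he).2)
      (((E ×ˢ (univ : Finset (Fin (k+1)))).filter
        (fun p => 0 < (fun (_ : Finset V) (_ : Fin (k+1)) => (1:ℚ)/(k+1)) p.1 p.2 ∧
          (fun (_ : Finset V) (_ : Fin (k+1)) => (1:ℚ)/(k+1)) p.1 p.2 < 1)).card)
      (fun _ _ => (1:ℚ)/(k+1))
      (le_refl _)
      (fun e _ i => by positivity)
      (fun e _ i => by
        rw [div_le_one hk1]
        linarith)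
      (fun e _ => by
        rw [Finset.sum_const, Finset.card_univ, Fintype.card_fin, nsmul_eq_mul]
        push_cast
        field_simp)
      (fun v i _ => by
        rw [Finset.sum_const, nsmul_eq_mul]
        ring)
    refine ⟨c, ?_⟩
    intro v i
    have hb := hc v i
    have hδv := hδ v
    have hδq : 2*(r:ℚ)*(k:ℚ)^2 ≤ ((E.filter (fun e => v ∈ e)).card : ℚ) := by
      exact_mod_cast hδv
    rw [Nat.le_div_iff_mul_le hkpos]
    have h6 : ((E.filter (fun e => v ∈ e ∧ c e = i)).card : ℚ) * ((k:ℚ)+1)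
        ≤ ((E.filter (fun e => v ∈ e)).card : ℚ) + 2*(r:ℚ)*(k:ℚ) := by
      rw [← add_div] at hb
      have := (le_div_iff₀ hk1).1 hb
      linarith
    have h7 : ((E.filter (fun e => v ∈ e ∧ c e = i)).card : ℚ) * (k:ℚ)
        ≤ ((E.filter (fun e => v ∈ e)).card : ℚ) := by
      have h6k := mul_le_mul_of_nonneg_right h6 (by positivity : (0:ℚ) ≤ (k:ℚ))
      have hkq : (0:ℚ) < (k:ℚ) := by exact_mod_cast hkpos
      refine le_of_mul_le_mul_right ?_ hk1
      nlinarith [h6k, hδq]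
    exact_mod_cast h7
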